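/- Let X be a Polish space and N ≥ k ≥ 2. The set E_{N,k} := { M_k S_N δ_{(x_1,…,x_N)} : (x_1,…,x_N) ∈ X^N } of extreme points of 𝒫_{N-rep}(X^k) is closed under narrow convergence: if μ^n ∈ E_{N,k} converge narrowly to μ ∈ 𝒫(X^k), then μ ∈ E_{N,k}. -/

import Mathlib

open MeasureTheory Filter Topology ENNReal

noncomputable section

namespace FiniteDeFinetti

variable {X : Type*}

/-- The symmetrization `S_N γ := (1/N!) ∑_{σ ∈ S_N} γ^σ` of a measure on `X^N`,
where `γ^σ` is the pushforward of `γ` under the coordinate permutation induced by `σ`. -/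
def symmetrize [MeasurableSpace X] (N : ℕ) (γ : Measure (Fin N → X)) :
    Measure (Fin N → X) :=
  (N.factorial : ℝ≥0∞)⁻¹ • ∑ σ : Equiv.Perm (Fin N), γ.map (fun x i => x (σ i))

/-- The `k`-point marginal `M_k γ` of a measure on `X^N` (projection on the first `k` coords). -/
def marginal [MeasurableSpace X] {k N : ℕ} (h : k ≤ N) (γ : Measure (Fin N → X)) :
    Measure (Fin k → X) :=
  γ.map (fun x i => x (Fin.castLE h i))

/-- `𝒫_sym(X^N)`: symmetric probability measures on `X^N`. -/
def PsymSet [MeasurableSpace X] (N : ℕ) : Set (Measure (Fin N → X)) :=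
  {γ | IsProbabilityMeasure γ ∧ γ = symmetrize N γ}

/-- `𝒫_{N-rep}(X^k)`: the `N`-representable `k`-plans. -/
def NRep [MeasurableSpace X] {k N : ℕ} (h : k ≤ N) : Set (Measure (Fin k → X)) :=
  {μ | ∃ γ : Measure (Fin N → X), γ ∈ PsymSet N ∧ μ = marginal h γ}

/-- Narrow (weak) convergence of a sequence of measures: convergence of integrals of all
bounded continuous functions. -/
def NarrowTendsto {Y : Type*} [MeasurableSpace Y] [TopologicalSpace Y]
    (μs : ℕ → Measure Y) (μ : Measure Y) : Prop :=
  ∀ φ : BoundedContinuousFunction Y ℝ,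
    Tendsto (fun n => ∫ y, φ y ∂(μs n)) atTop (𝓝 (∫ y, φ y ∂μ))

/-- The empirical measure `(1/N) ∑ δ_{x_i}`. -/
def empirical [MeasurableSpace X] (N : ℕ) (x : Fin N → X) : Measure X :=
  (N : ℝ≥0∞)⁻¹ • ∑ i, Measure.dirac (x i)

/-- Extreme point of a convex set of measures. -/
def IsExtremePt {Y : Type*} [MeasurableSpace Y] (C : Set (Measure Y)) (μ : Measure Y) : Prop :=
  μ ∈ C ∧ ∀ μ1 ∈ C, ∀ μ2 ∈ C, ∀ t : ℝ≥0∞, 0 < t → t < 1 →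
    μ = t • μ1 + (1 - t) • μ2 → μ1 = μ ∧ μ2 = μ

/-- The set `E_{N,k}` of marginals of symmetrized Dirac measures. -/
def ENk [MeasurableSpace X] {k N : ℕ} (h : k ≤ N) : Set (Measure (Fin k → X)) :=
  {μ | ∃ x : Fin N → X, μ = marginal h (symmetrize N (Measure.dirac x))}

/-- Borel σ-algebra on the space of probability measures with its narrow topology. -/
instance instMSPM {Y : Type*} [MeasurableSpace Y] [TopologicalSpace Y]
    [OpensMeasurableSpace Y] : MeasurableSpace (ProbabilityMeasure Y) := borel _

lemma empirical_isProbabilityMeasure [MeasurableSpace X] {N : ℕ} (hN : 0 < N) (x : Fin N → X) :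
    IsProbabilityMeasure (empirical N x) := by
  constructor
  simp only [empirical, Measure.smul_apply, smul_eq_mul]
  rw [Measure.finset_sum_apply]
  simp only [measure_univ, Finset.sum_const, Finset.card_univ, Fintype.card_fin, nsmul_eq_mul,
    mul_one]
  exact ENNReal.inv_mul_cancel (by exact_mod_cast hN.ne') (natCast_ne_top N)

/-- The empirical-measure map `Λ : X^N → 𝒫(X)`. -/
def empPM [MeasurableSpace X] {N : ℕ} (hN : 0 < N) (x : Fin N → X) : ProbabilityMeasure X :=
  ⟨empirical N x, empirical_isProbabilityMeasure hN x⟩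

/-- The set `𝒫_{1/N}(X)` of `1/N`-quantized probability measures (as probability measures). -/
def QuantizedPM [MeasurableSpace X] (N : ℕ) : Set (ProbabilityMeasure X) :=
  {lam | ∃ x : Fin N → X, (lam : Measure X) = empirical N x}

open Classical in
/-- The extremal `N`-representable `k`-plan `F_{N,k}(λ)` associated with a `1/N`-quantized
probability measure `λ = (1/N) ∑ δ_{x_i}`, namely `M_k S_N δ_{(x_1,…,x_N)}` (this does not
depend on the chosen enumeration of the atoms of `λ` counted with multiplicity); junk value
`λ^{⊗k}` for non-quantized `λ`. -/
def FNk [MeasurableSpace X] {k N : ℕ} (h : k ≤ N) (lam : ProbabilityMeasure X) :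
    Measure (Fin k → X) :=
  if hx : ∃ x : Fin N → X, (lam : Measure X) = empirical N x then
    marginal h (symmetrize N (Measure.dirac (Classical.choose hx)))
  else Measure.pi fun _ => (lam : Measure X)


lemma map_finset_sum {α β ι : Type*} [MeasurableSpace α] [MeasurableSpace β]
    (s : Finset ι) (μ : ι → Measure α) {f : α → β} (hf : Measurable f) :
    Measure.map f (∑ i ∈ s, μ i) = ∑ i ∈ s, Measure.map f (μ i) := by
  ext A hA
  rw [Measure.map_apply hf hA, Measure.finset_sum_apply, Measure.finset_sum_apply]
  simp_rw [Measure.map_apply hf hA]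

lemma marginal_symmetrize_dirac [MeasurableSpace X] {k N : ℕ} (h : k ≤ N) (x : Fin N → X) :
    marginal h (symmetrize N (Measure.dirac x)) =
      (N.factorial : ℝ≥0∞)⁻¹ •
        ∑ σ : Equiv.Perm (Fin N), Measure.dirac (fun i => x (σ (Fin.castLE h i))) := by
  have hproj : Measurable (fun y : Fin N → X => fun i : Fin k => y (Fin.castLE h i)) :=
    measurable_pi_lambda _ fun i => measurable_pi_apply _
  have hperm : ∀ σ : Equiv.Perm (Fin N), Measurable (fun y : Fin N → X => fun i => y (σ i)) :=
    fun σ => measurable_pi_lambda _ fun i => measurable_pi_apply _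
  unfold marginal symmetrize
  rw [Measure.map_smul, map_finset_sum _ _ hproj]
  congr 1
  refine Finset.sum_congr rfl fun σ _ => ?_
  rw [Measure.map_dirac' (hperm σ), Measure.map_dirac' hproj]

lemma isProbabilityMeasure_mssd [MeasurableSpace X] {k N : ℕ} (h : k ≤ N) (x : Fin N → X) :
    IsProbabilityMeasure (marginal h (symmetrize N (Measure.dirac x))) := by
  constructor
  rw [marginal_symmetrize_dirac, Measure.smul_apply, Measure.finset_sum_apply]
  simp only [measure_univ, Finset.sum_const, Finset.card_univ, Fintype.card_perm,
    Fintype.card_fin, nsmul_eq_mul, mul_one, smul_eq_mul]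
  exact ENNReal.inv_mul_cancel (by exact_mod_cast N.factorial_ne_zero) (natCast_ne_top _)

lemma integral_mssd [MeasurableSpace X] [TopologicalSpace X] [PolishSpace X] [BorelSpace X]
    {k N : ℕ} (h : k ≤ N) (x : Fin N → X) (φ : BoundedContinuousFunction (Fin k → X) ℝ) :
    ∫ y, φ y ∂(marginal h (symmetrize N (Measure.dirac x))) =
      (N.factorial : ℝ)⁻¹ * ∑ σ : Equiv.Perm (Fin N), φ (fun i => x (σ (Fin.castLE h i))) := by
  letI := TopologicalSpace.upgradeIsCompletelyMetrizable X
  rw [marginal_symmetrize_dirac, integral_smul_measure,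
    integral_finset_sum_measure (fun σ _ => φ.integrable _)]
  simp [integral_dirac, smul_eq_mul]

lemma tight {Y : Type*} [MetricSpace Y] [CompleteSpace Y] [TopologicalSpace.SeparableSpace Y]
    [MeasurableSpace Y] [OpensMeasurableSpace Y] (ν : Measure Y) [IsProbabilityMeasure ν]
    {ε : ℝ≥0∞} (hε : 0 < ε) : ∃ K : Set Y, IsCompact K ∧ ν Kᶜ ≤ ε := by
  rcases isEmpty_or_nonempty Y with hY | hY
  · refine ⟨∅, isCompact_empty, ?_⟩
    have : (∅ᶜ : Set Y) = ∅ := Set.eq_empty_of_isEmpty _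
    simp [this]
  obtain ⟨u, hu⟩ := TopologicalSpace.exists_dense_seq Y
  -- closed sets Bₙ m: union of closed balls of radius 1/(n+1) around u 0, ..., u m
  set B : ℕ → ℕ → Set Y := fun n m => ⋃ i ∈ Finset.range (m + 1),
    Metric.closedBall (u i) (1 / (n + 1)) with hB
  have hBclosed : ∀ n m, IsClosed (B n m) :=
    fun n m => Set.Finite.isClosed_biUnion (Finset.finite_toSet _)
      (fun i _ => Metric.isClosed_closedBall)
  have hBmono : ∀ n, Monotone (B n) := by
    intro n a b hab
    refine Set.iUnion₂_subset fun i hi => Set.subset_iUnion₂_of_subset i ?_ subset_rfl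
    exact Finset.mem_range.mpr (lt_of_lt_of_le (Finset.mem_range.mp hi) (by omega))
  have hBunion : ∀ n, (⋃ m, B n m) = Set.univ := by
    intro n
    refine Set.eq_univ_of_forall fun y => ?_
    obtain ⟨i, hi⟩ := hu.exists_dist_lt y (by positivity : (0:ℝ) < 1 / (n + 1))
    exact Set.mem_iUnion.mpr ⟨i, Set.mem_biUnion (Finset.self_mem_range_succ i) hi.le⟩
  -- choose mₙ with ν (B n mₙ)ᶜ ≤ ε/2 * 2⁻ⁿ
  have hchoice : ∀ n : ℕ, ∃ m : ℕ, ν (B n m)ᶜ ≤ ε / 2 * 2⁻¹ ^ n := by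
    intro n
    have hanti : Antitone (fun m => (B n m)ᶜ) := fun a b hab => Set.compl_subset_compl.mpr
      (hBmono n hab)
    have htends := MeasureTheory.tendsto_measure_iInter_atTop
      (μ := ν) (s := fun m => (B n m)ᶜ)
      (fun m => ((hBclosed n m).measurableSet.compl).nullMeasurableSet) hanti
      ⟨0, measure_ne_top _ _⟩
    have hint : (⋂ m, (B n m)ᶜ) = ∅ := by
      rw [← Set.compl_iUnion, hBunion n, Set.compl_univ]
    rw [hint, measure_empty] at htends
    have hpos : (0:ℝ≥0∞) < ε / 2 * 2⁻¹ ^ n := by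
      apply ENNReal.mul_pos
      · exact (ENNReal.div_pos hε.ne' (by norm_num : (2:ℝ≥0∞) ≠ ⊤)).ne'
      · exact (ENNReal.pow_pos (by simp) n).ne'
    obtain ⟨m, hm⟩ := (htends.eventually_le_const hpos).exists
    exact ⟨m, hm⟩
  choose m hm using hchoice
  refine ⟨⋂ n, B n (m n), ?_, ?_⟩
  · apply TotallyBounded.isCompact_of_isClosed
    · rw [Metric.totallyBounded_iff]
      intro r hr
      obtain ⟨n, hn⟩ := exists_nat_one_div_lt hr
      refine ⟨u '' (Finset.range (m n + 1) : Set ℕ), (Finset.finite_toSet _).image u, ?_⟩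
      intro y hy
      have : y ∈ B n (m n) := Set.mem_iInter.mp hy n
      obtain ⟨_, ⟨i, rfl⟩, h2⟩ := this
      simp only [Set.mem_iUnion, exists_prop] at h2
      obtain ⟨hi, hyball⟩ := h2
      refine Set.mem_biUnion ⟨i, by simpa using hi, rfl⟩ ?_
      exact lt_of_le_of_lt (Metric.mem_closedBall.mp hyball) hn
    · exact isClosed_iInter fun n => hBclosed n (m n)
  · calc ν (⋂ n, B n (m n))ᶜ = ν (⋃ n, (B n (m n))ᶜ) := by rw [Set.compl_iInter]
      _ ≤ ∑' n, ν (B n (m n))ᶜ := measure_iUnion_le _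
      _ ≤ ∑' n : ℕ, ε / 2 * 2⁻¹ ^ n := ENNReal.tsum_le_tsum fun n => hm n
      _ = ε / 2 * (1 - 2⁻¹)⁻¹ := by rw [ENNReal.tsum_mul_left, ENNReal.tsum_geometric]
      _ = ε := by
          rw [ENNReal.one_sub_inv_two, inv_inv]
          exact ENNReal.div_mul_cancel two_ne_zero (by norm_num : (2:ℝ≥0∞) ≠ ⊤)

/-- For a Polish space `X` and `N ≥ k ≥ 2`, the set
`E_{N,k} = {M_k S_N δ_{(x_1,…,x_N)} : x ∈ X^N}` of extreme points of `𝒫_{N-rep}(X^k)` is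
closed under narrow convergence. -/
theorem ENk_closed_narrow
    {X : Type*} [MeasurableSpace X] [TopologicalSpace X] [PolishSpace X] [BorelSpace X]
    {k N : ℕ} (hk : 2 ≤ k) (hkN : k ≤ N)
    (μs : ℕ → Measure (Fin k → X)) (μ : Measure (Fin k → X)) (hμ : IsProbabilityMeasure μ)
    (hmem : ∀ n, μs n ∈ ENk (X := X) hkN) (hconv : NarrowTendsto μs μ) :
    μ ∈ ENk (X := X) hkN := by
  classical
  letI := TopologicalSpace.upgradeIsCompletelyMetrizable X
  choose xs hxs using hmem
  have hk0 : 0 < k := by omega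
  set j0 : Fin k := ⟨0, hk0⟩ with hj0
  set j : Fin N := Fin.castLE hkN j0 with hj
  have hPn : ∀ n, IsProbabilityMeasure (μs n) := fun n => by
    rw [hxs n]; exact isProbabilityMeasure_mssd hkN (xs n)
  let P : ProbabilityMeasure (Fin k → X) := ⟨μ, hμ⟩
  let Pn : ℕ → ProbabilityMeasure (Fin k → X) := fun n => ⟨μs n, hPn n⟩
  have htend : Tendsto Pn atTop (𝓝 P) :=
    ProbabilityMeasure.tendsto_iff_forall_integral_tendsto.mpr fun f => hconv f
  have hevalm : Measurable fun y : Fin k → X => y j0 := measurable_pi_apply _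
  set ν : Measure X := μ.map (fun y => y j0) with hν
  haveI : IsProbabilityMeasure ν := Measure.isProbabilityMeasure_map hevalm.aemeasurable
  set c : ℝ≥0∞ := (N.factorial : ℝ≥0∞)⁻¹ with hc
  have hc0 : c ≠ 0 := ENNReal.inv_ne_zero.mpr (natCast_ne_top _)
  have hcne : c ≠ ⊤ := ENNReal.inv_ne_top.mpr (by exact_mod_cast N.factorial_ne_zero)
  obtain ⟨K, hKcomp, hKν⟩ := tight ν (ENNReal.half_pos hc0)
  have hhalf : c / 2 < c := ENNReal.half_lt_self hc0 hcne
  have hatoms : ∀ ε : ℝ, 0 < ε → ∀ᶠ n in atTop, ∀ i, xs n i ∈ Metric.thickening ε K := by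
    intro ε hε
    set F : Set (Fin k → X) := (fun y => y j0) ⁻¹' (Metric.thickening ε K)ᶜ with hF
    have hFclosed : IsClosed F :=
      (Metric.isOpen_thickening.isClosed_compl).preimage (continuous_apply j0)
    have hμF : (P : Measure (Fin k → X)) F ≤ c / 2 := by
      refine le_trans ?_ hKν
      have hsub : F ⊆ (fun y : Fin k → X => y j0) ⁻¹' Kᶜ := fun y hy hyK =>
        hy (Metric.self_subset_thickening hε K hyK)
      calc (P : Measure (Fin k → X)) F
          ≤ (P : Measure (Fin k → X)) ((fun y : Fin k → X => y j0) ⁻¹' Kᶜ) := measure_mono hsub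
        _ = ν Kᶜ := (Measure.map_apply hevalm hKcomp.isClosed.measurableSet.compl).symm
    have hlimsup := ProbabilityMeasure.limsup_measure_closed_le_of_tendsto htend hFclosed
    have hlt : limsup (fun n => (Pn n : Measure (Fin k → X)) F) atTop < c :=
      lt_of_le_of_lt (le_trans hlimsup hμF) hhalf
    filter_upwards [eventually_lt_of_limsup_lt hlt] with n hn
    intro i
    by_contra hbad
    have hlow : c ≤ (μs n) F := by
      rw [hxs n, marginal_symmetrize_dirac]
      set σ0 : Equiv.Perm (Fin N) := Equiv.swap j i with hσ0
      have hval : (fun i' : Fin k => xs n (σ0 (Fin.castLE hkN i'))) j0 = xs n i := by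
        simp only [← hj, hσ0, Equiv.swap_apply_left]
      have hmem0 : (fun i' : Fin k => xs n (σ0 (Fin.castLE hkN i'))) ∈ F := by
        simp only [hF, Set.mem_preimage, hval, Set.mem_compl_iff]
        exact hbad
      have hd : Measure.dirac (fun i' : Fin k => xs n (σ0 (Fin.castLE hkN i'))) F = 1 := by
        rw [Measure.dirac_apply' _ hFclosed.measurableSet, Set.indicator_of_mem hmem0,
          Pi.one_apply]
      rw [Measure.smul_apply, Measure.finset_sum_apply, smul_eq_mul]
      calc c = c * 1 := (mul_one c).symm
        _ ≤ c * ∑ σ : Equiv.Perm (Fin N),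
              Measure.dirac (fun i' : Fin k => xs n (σ (Fin.castLE hkN i'))) F := by
            apply mul_le_mul_right
            rw [← hd]
            exact Finset.single_le_sum (f := fun σ : Equiv.Perm (Fin N) =>
              Measure.dirac (fun i' : Fin k => xs n (σ (Fin.castLE hkN i'))) F)
              (fun _ _ => zero_le) (Finset.mem_univ σ0)
    exact absurd hn (not_lt.mpr hlow)
  set T : Set X := ⋃ n, Set.range (xs n) with hT
  have hTB : TotallyBounded T := by
    rw [Metric.totallyBounded_iff]
    intro r hr
    obtain ⟨n₀, hn₀⟩ := eventually_atTop.mp (hatoms (r / 2) (by positivity))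
    obtain ⟨t₁, ht₁fin, ht₁⟩ :=
      Metric.totallyBounded_iff.mp hKcomp.totallyBounded (r / 2) (by positivity)
    refine ⟨t₁ ∪ ⋃ n ∈ Finset.range n₀, Set.range (xs n),
      ht₁fin.union (Set.Finite.biUnion (Finset.finite_toSet _)
        fun n _ => Set.finite_range _), ?_⟩
    rintro y ⟨_, ⟨n, rfl⟩, ⟨i, rfl⟩⟩
    by_cases hn : n < n₀
    · refine Set.mem_iUnion₂.mpr ⟨xs n i, Set.mem_union_right _ ?_, Metric.mem_ball_self hr⟩
      exact Set.mem_iUnion₂.mpr ⟨n, Finset.mem_range.mpr hn, ⟨i, rfl⟩⟩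
    · push_neg at hn
      obtain ⟨z, hzK, hz⟩ := Metric.mem_thickening_iff.mp (hn₀ n hn i)
      rcases Set.mem_iUnion₂.mp (ht₁ hzK) with ⟨y₀, hy₀, hzy₀⟩
      refine Set.mem_iUnion₂.mpr ⟨y₀, Set.mem_union_left _ hy₀, ?_⟩
      have hdist : dist (xs n i) y₀ < r := by
        calc dist (xs n i) y₀ ≤ dist (xs n i) z + dist z y₀ := dist_triangle _ _ _
          _ < r / 2 + r / 2 := add_lt_add hz (Metric.mem_ball.mp hzy₀)
          _ = r := add_halves r
      exact Metric.mem_ball.mpr hdist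
  have hCcomp : IsCompact (closure T) :=
    TotallyBounded.isCompact_of_isClosed hTB.closure isClosed_closure
  have hmemC : ∀ n, xs n ∈ Set.univ.pi fun _ : Fin N => closure T := fun n i _ =>
    subset_closure (Set.mem_iUnion.mpr ⟨n, ⟨i, rfl⟩⟩)
  obtain ⟨xlim, -, ζ, hζ, hζlim⟩ := (isCompact_univ_pi fun _ => hCcomp).tendsto_subseq hmemC
  refine ⟨xlim, ?_⟩
  let Q : ProbabilityMeasure (Fin k → X) :=
    ⟨marginal hkN (symmetrize N (Measure.dirac xlim)), isProbabilityMeasure_mssd hkN xlim⟩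
  have h1 : Tendsto (Pn ∘ ζ) atTop (𝓝 P) := htend.comp hζ.tendsto_atTop
  have h2 : Tendsto (Pn ∘ ζ) atTop (𝓝 Q) := by
    rw [ProbabilityMeasure.tendsto_iff_forall_integral_tendsto]
    intro f
    have heq : ∀ m : ℕ, ∫ y, f y ∂((Pn ∘ ζ) m : Measure (Fin k → X)) =
        (N.factorial : ℝ)⁻¹ * ∑ σ : Equiv.Perm (Fin N),
          f (fun i => xs (ζ m) (σ (Fin.castLE hkN i))) := by
      intro m
      show ∫ y, f y ∂(μs (ζ m)) = _
      rw [hxs (ζ m), integral_mssd]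
    have hgoalR : ∫ y, f y ∂(Q : Measure (Fin k → X)) =
        (N.factorial : ℝ)⁻¹ * ∑ σ : Equiv.Perm (Fin N),
          f (fun i => xlim (σ (Fin.castLE hkN i))) := integral_mssd hkN xlim f
    simp_rw [heq, hgoalR]
    apply Filter.Tendsto.const_mul
    apply tendsto_finset_sum
    intro σ _
    have hcont : Continuous (fun x : Fin N → X => (fun i : Fin k => x (σ (Fin.castLE hkN i)))) :=
      continuous_pi fun i => continuous_apply _
    exact ((f.continuous.comp hcont).tendsto xlim).comp hζlim
  have hPQ : P = Q := tendsto_nhds_unique h1 h2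
  exact congrArg (fun p : ProbabilityMeasure (Fin k → X) => (p : Measure (Fin k → X))) hPQ


end FiniteDeFinetti
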